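/- In any Hamiltonian decomposition of K(a^{(p)}; λ₁, λ₂) with p > 1 parts of size a ≥ 2, each Hamiltonian cycle contains at least p mixed edges (edges with endpoints in different parts), and the total number of mixed edges is λ₂a²·p(p−1)/2; consequently λ₂a²p(p−1)/2 ≥ p(λ₁(a−1)+λ₂a(p−1))/2, which implies λ₁ ≤ λ₂a(p−1). -/

import Mathlib

/-- Degree of `v` in the edge set `S` (loops count twice). -/
noncomputable def degIn {V E : Type} (ends : E → V × V) (S : Finset E) (v : V) : ℕ :=
  Nat.card {e : E // e ∈ S ∧ (ends e).1 = v} + Nat.card {e : E // e ∈ S ∧ (ends e).2 = v}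

/-- The edge set `S` is connected: every two vertices are joined by a walk of edges of `S`. -/
def connIn {V E : Type} (ends : E → V × V) (S : Finset E) : Prop :=
  ∀ u v : V,
    Relation.ReflTransGen (fun a b => ∃ e ∈ S, ends e = (a, b) ∨ ends e = (b, a)) u v

/-- `S` induces a spanning (Hamiltonian) cycle: every vertex has degree 2 in `S`
and `S` is connected. -/
def IsHamCycle {V E : Type} (ends : E → V × V) (S : Finset E) : Prop :=
  (∀ v : V, degIn ends S v = 2) ∧ connIn ends S

/-- `D` is a Hamiltonian decomposition: a partition of the edge set into
spanning cycles. -/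
def IsHamDecomp {V E : Type} (ends : E → V × V) (D : Finset (Finset E)) : Prop :=
  (∀ S ∈ D, IsHamCycle ends S) ∧ ∀ e : E, ∃! S : Finset E, S ∈ D ∧ e ∈ S

/-- Edge type of `K(a^{(p)}; λ₁, λ₂)`: vertices are `Fin (p*a)` with `v` lying in
part `v / a`; each pair of distinct vertices in the same part is joined by `λ₁`
edges, and each pair in different parts by `λ₂` edges. -/
abbrev KEdge (p a l1 l2 : ℕ) : Type :=
  Σ q : {q : Fin (p * a) × Fin (p * a) // q.1 < q.2},
    Fin (if q.val.1.val / a = q.val.2.val / a then l1 else l2)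

/-- Endpoints of an edge of `K(a^{(p)}; λ₁, λ₂)`. -/
def Kends (p a l1 l2 : ℕ) : KEdge p a l1 l2 → Fin (p * a) × Fin (p * a) :=
  fun e => (e.1.val.1, e.1.val.2)

/-- An edge of `K(a^{(p)}; λ₁, λ₂)` is mixed if its endpoints lie in different parts. -/
def KMixed (p a l1 l2 : ℕ) (e : KEdge p a l1 l2) : Prop :=
  ((Kends p a l1 l2 e).1.val / a ≠ (Kends p a l1 l2 e).2.val / a)

/- ======================= auxiliary material ======================= -/

open Finset

instance (p a l1 l2 : ℕ) : DecidablePred (KMixed p a l1 l2) :=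
  fun _ => inferInstanceAs (Decidable (¬ _ = _))

section Gen
variable {V E : Type} [Fintype E] [DecidableEq E]

lemma natCard_mem_and (S : Finset E) (P : E → Prop) [DecidablePred P] :
    Nat.card {e : E // e ∈ S ∧ P e} = (S.filter P).card := by
  rw [Nat.card_eq_fintype_card, Fintype.card_subtype]
  congr 1; ext e; simp

lemma degIn_eq [DecidableEq V] (ends : E → V × V) (S : Finset E) (v : V) :
    degIn ends S v = (S.filter (fun e => (ends e).1 = v)).card
      + (S.filter (fun e => (ends e).2 = v)).card := by
  unfold degIn; rw [natCard_mem_and, natCard_mem_and]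

lemma handshake [DecidableEq V] (ends : E → V × V) (S : Finset E) (P : Finset V) :
    ∑ v ∈ P, degIn ends S v
      = ∑ e ∈ S, ((if (ends e).1 ∈ P then 1 else 0) + (if (ends e).2 ∈ P then 1 else 0)) := by
  simp only [degIn_eq, Finset.sum_add_distrib]
  congr 1 <;>
  · simp only [Finset.card_filter]
    rw [Finset.sum_comm]
    refine Finset.sum_congr rfl fun e _ => ?_
    simp [Finset.sum_ite_eq]

lemma sum_filter_partition (D : Finset (Finset E))
    (hu : ∀ e : E, ∃! S, S ∈ D ∧ e ∈ S) (P : E → Prop) [DecidablePred P] :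
    ∑ S ∈ D, (S.filter P).card = (univ.filter P).card := by
  rw [← Finset.card_biUnion]
  · congr 1
    ext e
    simp only [Finset.mem_biUnion, Finset.mem_filter, Finset.mem_univ, true_and]
    constructor
    · rintro ⟨S, _, hS, hP⟩; exact hP
    · intro hP
      obtain ⟨S, ⟨hSD, heS⟩, -⟩ := hu e
      exact ⟨S, hSD, heS, hP⟩
  · intro S hS T hT hST
    rw [Function.onFun, Finset.disjoint_left]
    intro e heS heT
    obtain ⟨W, -, hWu⟩ := hu e
    exact hST ((hWu S ⟨hS, (Finset.mem_filter.mp heS).1⟩).trans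
      (hWu T ⟨hT, (Finset.mem_filter.mp heT).1⟩).symm)

lemma cross_even [DecidableEq V] (ends : E → V × V) (S : Finset E) (P : Finset V)
    (hdeg : ∀ v, degIn ends S v = 2) :
    2 * (S.filter (fun e => (ends e).1 ∈ P ∧ (ends e).2 ∈ P)).card
      + (S.filter (fun e => ¬((ends e).1 ∈ P ↔ (ends e).2 ∈ P))).card = 2 * P.card := by
  have h := handshake ends S P
  simp only [hdeg, Finset.sum_const, smul_eq_mul] at h
  rw [mul_comm] at h
  rw [h]
  simp only [Finset.card_filter, Finset.mul_sum, ← Finset.sum_add_distrib]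
  refine Finset.sum_congr rfl fun e _ => ?_
  by_cases h1 : (ends e).1 ∈ P <;> by_cases h2 : (ends e).2 ∈ P <;> simp [h1, h2]

omit [Fintype E] [DecidableEq E] in
lemma exists_cross (ends : E → V × V) (S : Finset E) (Q : V → Prop)
    {u v : V}
    (h : Relation.ReflTransGen (fun a b => ∃ e ∈ S, ends e = (a, b) ∨ ends e = (b, a)) u v)
    (hu : Q u) (hv : ¬ Q v) :
    ∃ e ∈ S, ¬ (Q (ends e).1 ↔ Q (ends e).2) := by
  induction h with
  | refl => exact absurd hu hv
  | @tail b c hab hbc ih =>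
    by_cases hb : Q b
    · obtain ⟨e, heS, h1 | h1⟩ := hbc <;>
      · refine ⟨e, heS, ?_⟩
        rw [h1]
        simp only []
        tauto
    · exact ih hb

end Gen

lemma card_part (p a : ℕ) (ha : 0 < a) (c : ℕ) (hc : c < p) :
    ((univ : Finset (Fin (p * a))).filter (fun v => v.val / a = c)).card = a := by
  have h : (Finset.Ico (c * a) (c * a + a)).card = a := by simp
  have key : ((univ : Finset (Fin (p * a))).filter (fun v => v.val / a = c)).card
      = (Finset.Ico (c * a) (c * a + a)).card := by
    apply Finset.card_nbij (i := fun v => v.val)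
    · intro v hv
      simp only [Finset.mem_coe, Finset.mem_filter, Finset.mem_univ, true_and] at hv
      simp only [Finset.mem_coe, Finset.mem_Ico]
      constructor
      · calc c * a = v.val / a * a := by rw [hv]
          _ ≤ v.val := Nat.div_mul_le_self _ _
      · have h1 : v.val / a < c + 1 := by omega
        have := (Nat.div_lt_iff_lt_mul ha).mp h1
        have h3 : (c + 1) * a = c * a + a := by ring
        omega
    · intro x hx y hy hxy
      exact Fin.val_injective hxy
    · intro x hx
      simp only [Finset.coe_Ico, Set.mem_Ico] at hx
      have h3 : (c + 1) * a = c * a + a := by ring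
      have hxlt : x < p * a := by
        have h2 : c + 1 ≤ p := hc
        have := Nat.mul_le_mul_right a h2
        omega
      refine ⟨⟨x, hxlt⟩, ?_, rfl⟩
      simp only [Finset.mem_coe, Finset.mem_filter, Finset.mem_univ, true_and]
      apply Nat.div_eq_of_lt_le
      · omega
      · omega
  rw [key, h]

lemma card_notpart (p a : ℕ) (ha : 0 < a) (c : ℕ) (hc : c < p) :
    ((univ : Finset (Fin (p * a))).filter (fun v => ¬ v.val / a = c)).card = p * a - a := by
  have h := Finset.card_filter_add_card_filter_not
    (s := (univ : Finset (Fin (p * a)))) (p := fun v => v.val / a = c)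
  rw [card_part p a ha c hc] at h
  simp only [Finset.card_univ, Fintype.card_fin] at h
  omega

lemma card_diff_pairs (p a : ℕ) (ha : 0 < a) :
    ((univ : Finset (Fin (p * a) × Fin (p * a))).filter
      (fun q => ¬ q.1.val / a = q.2.val / a)).card = p * a * (p * a - a) := by
  rw [Finset.card_filter, ← Finset.univ_product_univ, Finset.sum_product]
  have inner : ∀ u : Fin (p * a),
      (∑ v : Fin (p * a), if ¬ u.val / a = v.val / a then 1 else 0) = p * a - a := by
    intro u
    rw [← Finset.card_filter]
    have hc : u.val / a < p := by
      rw [Nat.div_lt_iff_lt_mul ha]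
      exact u.isLt
    rw [show (Finset.filter (fun v : Fin (p * a) => ¬ u.val / a = v.val / a) univ)
        = (Finset.filter (fun v : Fin (p * a) => ¬ v.val / a = u.val / a) univ) by
      apply Finset.filter_congr; intro v _; simp [eq_comm]]
    exact card_notpart p a ha _ hc
  rw [Finset.sum_congr rfl (fun u _ => inner u)]
  simp [Finset.sum_const, Finset.card_univ]

lemma card_lt_diff_pairs (p a : ℕ) (ha : 0 < a) :
    2 * ((univ : Finset (Fin (p * a) × Fin (p * a))).filter
      (fun q => q.1 < q.2 ∧ ¬ q.1.val / a = q.2.val / a)).card = p * a * (p * a - a) := by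
  set C := (univ : Finset (Fin (p * a) × Fin (p * a))).filter
      (fun q => ¬ q.1.val / a = q.2.val / a) with hC
  have hsplit := Finset.card_filter_add_card_filter_not
    (s := C) (p := fun q => q.1 < q.2)
  have h1 : C.filter (fun q => q.1 < q.2)
      = (univ : Finset (Fin (p * a) × Fin (p * a))).filter
        (fun q => q.1 < q.2 ∧ ¬ q.1.val / a = q.2.val / a) := by
    rw [hC, Finset.filter_filter]
    apply Finset.filter_congr; intro q _; simp [and_comm]
  have h2 : (C.filter (fun q => ¬ q.1 < q.2)).card = (C.filter (fun q => q.1 < q.2)).card := by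
    apply Finset.card_nbij (i := Prod.swap)
    · intro q hq
      simp only [Finset.mem_coe, hC, Finset.filter_filter, Finset.mem_filter,
        Finset.mem_univ, true_and] at hq ⊢
      obtain ⟨hd, hlt⟩ := hq
      have hne : q.1 ≠ q.2 := by
        intro h; rw [h] at hd; exact hd rfl
      have : q.2 < q.1 := by
        rcases lt_trichotomy q.1 q.2 with h | h | h
        · exact absurd h hlt
        · exact absurd h hne
        · exact h
      exact ⟨fun h => hd (h.symm), this⟩
    · intro x _ y _ hxy
      exact Prod.swap_injective hxy
    · intro q hq
      simp only [Finset.mem_coe, hC, Finset.filter_filter, Finset.mem_filter,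
        Finset.mem_univ, true_and] at hq
      refine ⟨q.swap, ?_, Prod.swap_swap q⟩
      simp only [Finset.mem_coe, hC, Finset.filter_filter, Finset.mem_filter,
        Finset.mem_univ, true_and, Prod.fst_swap, Prod.snd_swap]
      exact ⟨fun h => hq.1 h.symm, not_lt.mpr hq.2.le⟩
  rw [h1] at hsplit h2
  rw [← card_diff_pairs p a ha, ← hsplit, h2]
  ring

lemma KMixed_total (p a l1 l2 : ℕ) (ha : 0 < a) :
    2 * Nat.card {e : KEdge p a l1 l2 // KMixed p a l1 l2 e} = l2 * a ^ 2 * p * (p - 1) := by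
  have h0 : Nat.card {e : KEdge p a l1 l2 // KMixed p a l1 l2 e}
      = ((univ : Finset (KEdge p a l1 l2)).filter (KMixed p a l1 l2)).card := by
    rw [Nat.card_eq_fintype_card, Fintype.card_subtype]
  have h1 : (univ : Finset (KEdge p a l1 l2)).filter (KMixed p a l1 l2)
      = ((univ : Finset {q : Fin (p*a) × Fin (p*a) // q.1 < q.2}).filter
          (fun q => ¬ q.val.1.val / a = q.val.2.val / a)).sigma (fun _ => univ) := by
    ext ⟨q, k⟩
    simp [Finset.mem_sigma, KMixed, Kends]
  rw [h0, h1, Finset.card_sigma]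
  rw [Finset.sum_congr rfl (g := fun _ => l2) (fun q hq => by
    simp only [Finset.mem_filter] at hq
    simp [if_neg hq.2])]
  rw [Finset.sum_const, smul_eq_mul]
  have h3 : ((univ : Finset {q : Fin (p*a) × Fin (p*a) // q.1 < q.2}).filter
      (fun q => ¬ q.val.1.val / a = q.val.2.val / a)).card
      = ((univ : Finset (Fin (p*a) × Fin (p*a))).filter
          (fun q => q.1 < q.2 ∧ ¬ q.1.val / a = q.2.val / a)).card := by
    rw [← Fintype.card_subtype, ← Fintype.card_subtype]
    exact Fintype.card_congr (Equiv.subtypeSubtypeEquivSubtypeInter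
      (fun q : Fin (p*a) × Fin (p*a) => q.1 < q.2) (fun q => ¬ q.1.val / a = q.2.val / a))
  rw [h3, show 2 * (((univ : Finset (Fin (p*a) × Fin (p*a))).filter
          (fun q => q.1 < q.2 ∧ ¬ q.1.val / a = q.2.val / a)).card * l2)
      = 2 * ((univ : Finset (Fin (p*a) × Fin (p*a))).filter
          (fun q => q.1 < q.2 ∧ ¬ q.1.val / a = q.2.val / a)).card * l2 by ring,
    card_lt_diff_pairs p a ha]
  have h4 : p * a - a = (p - 1) * a := by rw [Nat.sub_mul, one_mul]
  rw [h4]; ring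

lemma deg_zero (p a l1 l2 : ℕ) (hp : 1 < p) (ha : 2 ≤ a)
    (v0 : Fin (p * a)) (hv0 : v0.val = 0) :
    ((univ : Finset (KEdge p a l1 l2)).filter
        (fun e => (Kends p a l1 l2 e).1 = v0)).card
      + ((univ : Finset (KEdge p a l1 l2)).filter
        (fun e => (Kends p a l1 l2 e).2 = v0)).card
      = l1 * (a - 1) + l2 * (p * a - a) := by
  have ha0 : 0 < a := by omega
  have h2 : ((univ : Finset (KEdge p a l1 l2)).filter
      (fun e => (Kends p a l1 l2 e).2 = v0)).card = 0 := by
    rw [Finset.card_eq_zero, Finset.filter_eq_empty_iff]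
    intro e _
    intro hcon
    have hlt := e.1.prop
    rw [show e.1.val.2 = v0 from hcon] at hlt
    have : e.1.val.1.val < 0 := by
      have := (Fin.lt_def).mp hlt
      omega
    omega
  rw [h2, Nat.add_zero]
  have h1 : (univ : Finset (KEdge p a l1 l2)).filter (fun e => (Kends p a l1 l2 e).1 = v0)
      = ((univ : Finset {q : Fin (p*a) × Fin (p*a) // q.1 < q.2}).filter
          (fun q => q.val.1 = v0)).sigma (fun _ => univ) := by
    ext ⟨q, k⟩
    simp [Finset.mem_sigma, Kends]
  rw [h1, Finset.card_sigma]
  rw [Finset.sum_congr rfl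
    (g := fun q : {q : Fin (p*a) × Fin (p*a) // q.1 < q.2} =>
      if q.val.1.val / a = q.val.2.val / a then l1 else l2)
    (fun q _ => by simp)]
  have hbij : ∑ q ∈ ((univ : Finset {q : Fin (p*a) × Fin (p*a) // q.1 < q.2}).filter
        (fun q => q.val.1 = v0)),
      (if q.val.1.val / a = q.val.2.val / a then l1 else l2)
      = ∑ v ∈ (univ : Finset (Fin (p*a))).filter (fun v => v0 < v),
        (if v0.val / a = v.val / a then l1 else l2) := by
    apply Finset.sum_bij (i := fun q _ => q.val.2)
    · intro q hq
      simp only [Finset.mem_filter, Finset.mem_univ, true_and] at hq ⊢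
      rw [← hq]; exact q.prop
    · intro q1 h1' q2 h2' heq
      simp only [Finset.mem_filter, Finset.mem_univ, true_and] at h1' h2'
      apply Subtype.ext
      exact Prod.ext (h1'.trans h2'.symm) heq
    · intro v hv
      simp only [Finset.mem_filter, Finset.mem_univ, true_and] at hv
      exact ⟨⟨(v0, v), hv⟩, by simp, rfl⟩
    · intro q hq
      simp only [Finset.mem_filter, Finset.mem_univ, true_and] at hq
      rw [hq]
  rw [hbij, Finset.sum_ite, Finset.sum_const, Finset.sum_const, smul_eq_mul, smul_eq_mul,
    Finset.filter_filter, Finset.filter_filter]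
  have hA : ((univ : Finset (Fin (p*a))).filter
        (fun v => v0 < v ∧ v0.val / a = v.val / a))
      = ((univ : Finset (Fin (p*a))).filter (fun v => v.val / a = 0)).erase v0 := by
    ext v
    simp only [Finset.mem_filter, Finset.mem_univ, true_and, Finset.mem_erase,
      Fin.lt_def, hv0, Nat.zero_div, Ne, Fin.ext_iff]
    constructor
    · rintro ⟨h1', h2'⟩
      exact ⟨by omega, h2'.symm⟩
    · rintro ⟨h1', h2'⟩
      exact ⟨by omega, h2'.symm⟩
  have hB : ((univ : Finset (Fin (p*a))).filter
        (fun v => v0 < v ∧ ¬ v0.val / a = v.val / a))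
      = (univ : Finset (Fin (p*a))).filter (fun v => ¬ v.val / a = 0) := by
    ext v
    simp only [Finset.mem_filter, Finset.mem_univ, true_and, Fin.lt_def, hv0, Nat.zero_div]
    constructor
    · rintro ⟨h1', h2'⟩
      intro hcon; exact h2' hcon.symm
    · intro h
      constructor
      · by_contra hcon
        have : v.val = 0 := by omega
        exact h (by rw [this, Nat.zero_div])
      · intro hcon; exact h hcon.symm
  rw [hA, hB, Finset.card_erase_of_mem (by simp [hv0, ha0]), card_part p a ha0 0 (by omega),
    card_notpart p a ha0 0 (by omega)]
  ring

lemma cycle_mixed (p a l1 l2 : ℕ) (hp : 1 < p) (ha : 2 ≤ a)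
    (S : Finset (KEdge p a l1 l2))
    (hdeg : ∀ v, degIn (Kends p a l1 l2) S v = 2)
    (hconn : connIn (Kends p a l1 l2) S) :
    p ≤ (S.filter (KMixed p a l1 l2)).card := by
  have ha0 : 0 < a := by omega
  set ends := Kends p a l1 l2 with hends
  have key : ∀ i, i < p → 2 ≤ (S.filter
      (fun e => ¬((ends e).1.val / a = i ↔ (ends e).2.val / a = i))).card := by
    intro i hi
    have hev := cross_even ends S ((univ : Finset (Fin (p * a))).filter
      (fun v => v.val / a = i)) hdeg
    simp only [Finset.mem_filter, Finset.mem_univ, true_and] at hev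
    rw [card_part p a ha0 i hi] at hev
    have hu : (⟨i * a, by
        exact (Nat.mul_lt_mul_right ha0).mpr hi⟩ : Fin (p * a)).val / a = i := by
      simp [Nat.mul_div_cancel _ ha0]
    set j : ℕ := if i = 0 then 1 else 0 with hj
    have hjp : j < p := by rw [hj]; split <;> omega
    have hji : j ≠ i := by rw [hj]; split <;> omega
    have hw : ¬ ((⟨j * a, by
        exact (Nat.mul_lt_mul_right ha0).mpr hjp⟩ : Fin (p * a)).val / a = i) := by
      simp only [Nat.mul_div_cancel _ ha0]
      exact hji
    obtain ⟨e, heS, hce⟩ := exists_cross ends S (fun v => v.val / a = i)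
      (hconn _ _) hu hw
    have hpos : 0 < (S.filter
        (fun e => ¬((ends e).1.val / a = i ↔ (ends e).2.val / a = i))).card :=
      Finset.card_pos.mpr ⟨e, Finset.mem_filter.mpr ⟨heS, hce⟩⟩
    omega
  have hsum2 : ∑ i ∈ Finset.range p, (S.filter
      (fun e => ¬((ends e).1.val / a = i ↔ (ends e).2.val / a = i))).card
      = 2 * (S.filter (KMixed p a l1 l2)).card := by
    simp only [Finset.card_filter]
    rw [Finset.sum_comm, Finset.mul_sum]
    refine Finset.sum_congr rfl fun e _ => ?_
    rw [← Finset.card_filter]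
    have hc1 : (ends e).1.val / a < p := by
      rw [Nat.div_lt_iff_lt_mul ha0]; exact (ends e).1.isLt
    have hc2 : (ends e).2.val / a < p := by
      rw [Nat.div_lt_iff_lt_mul ha0]; exact (ends e).2.isLt
    by_cases hm : KMixed p a l1 l2 e
    · have hne : (ends e).1.val / a ≠ (ends e).2.val / a := hm
      have hfil : (Finset.range p).filter
          (fun i => ¬((ends e).1.val / a = i ↔ (ends e).2.val / a = i))
          = {(ends e).1.val / a, (ends e).2.val / a} := by
        ext i
        simp only [Finset.mem_filter, Finset.mem_range, Finset.mem_insert,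
          Finset.mem_singleton]
        omega
      rw [hfil, if_pos hm,
        Finset.card_insert_of_notMem (by simpa using hne), Finset.card_singleton]
      omega
    · have heq : (ends e).1.val / a = (ends e).2.val / a := by
        by_contra hcon; exact hm hcon
      have hfil : (Finset.range p).filter
          (fun i => ¬((ends e).1.val / a = i ↔ (ends e).2.val / a = i)) = ∅ := by
        rw [Finset.filter_eq_empty_iff]
        intro i _
        rw [heq]
        simp
      rw [hfil, if_neg hm]
      simp
  have hge : 2 * p ≤ ∑ i ∈ Finset.range p, (S.filter
      (fun e => ¬((ends e).1.val / a = i ↔ (ends e).2.val / a = i))).card := by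
    calc 2 * p = ∑ _i ∈ Finset.range p, 2 := by simp [mul_comm]
      _ ≤ _ := Finset.sum_le_sum fun i hi => key i (Finset.mem_range.mp hi)
  omega

/- ======================= main theorem ======================= -/

/-- In any Hamiltonian decomposition of `K(a^{(p)}; λ₁, λ₂)` (`p > 1`, `a ≥ 2`,
`λ₂ ≥ 1`): each Hamiltonian cycle contains at least `p` mixed edges, the total number
of mixed edges is `λ₂a²p(p-1)/2`; consequently `λ₂a²p(p-1)/2 ≥ p(λ₁(a-1)+λ₂a(p-1))/2`,
which implies `λ₁ ≤ λ₂a(p-1)`. -/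
theorem K_hamDecomp_mixed_edges (p a l1 l2 : ℕ) (hp : 1 < p) (ha : 2 ≤ a)
    (hl2 : 1 ≤ l2)
    (D : Finset (Finset (KEdge p a l1 l2))) (hD : IsHamDecomp (Kends p a l1 l2) D) :
    (∀ S ∈ D, p ≤ Nat.card {e : KEdge p a l1 l2 // e ∈ S ∧ KMixed p a l1 l2 e}) ∧
    2 * Nat.card {e : KEdge p a l1 l2 // KMixed p a l1 l2 e} = l2 * a ^ 2 * p * (p - 1) ∧
    p * (l1 * (a - 1) + l2 * a * (p - 1)) ≤ l2 * a ^ 2 * p * (p - 1) ∧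
    l1 ≤ l2 * a * (p - 1) := by
  have ha0 : 0 < a := by omega
  have hpa : 0 < p * a := Nat.mul_pos (by omega) ha0
  obtain ⟨hcyc, huniq⟩ := hD
  have part1 : ∀ S ∈ D, p ≤ Nat.card {e : KEdge p a l1 l2 // e ∈ S ∧ KMixed p a l1 l2 e} := by
    intro S hS
    rw [natCard_mem_and]
    exact cycle_mixed p a l1 l2 hp ha S (hcyc S hS).1 (hcyc S hS).2
  have part2 := KMixed_total p a l1 l2 ha0
  have hdeg2 : 2 * D.card = l1 * (a - 1) + l2 * (p * a - a) := by
    have hsplit : ∑ S ∈ D, degIn (Kends p a l1 l2) S (⟨0, hpa⟩ : Fin (p * a))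
        = l1 * (a - 1) + l2 * (p * a - a) := by
      simp only [degIn_eq, Finset.sum_add_distrib]
      rw [sum_filter_partition D huniq, sum_filter_partition D huniq]
      exact deg_zero p a l1 l2 hp ha _ rfl
    rw [← hsplit, Finset.sum_congr rfl (fun S hS => (hcyc S hS).1 _)]
    simp [mul_comm]
  have hMsum : ∑ S ∈ D, (S.filter (KMixed p a l1 l2)).card
      = ((univ : Finset (KEdge p a l1 l2)).filter (KMixed p a l1 l2)).card :=
    sum_filter_partition D huniq _
  have hM : Nat.card {e : KEdge p a l1 l2 // KMixed p a l1 l2 e}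
      = ((univ : Finset (KEdge p a l1 l2)).filter (KMixed p a l1 l2)).card := by
    rw [Nat.card_eq_fintype_card, Fintype.card_subtype]
  have hDlow : D.card * p ≤ Nat.card {e : KEdge p a l1 l2 // KMixed p a l1 l2 e} := by
    rw [hM, ← hMsum]
    calc D.card * p = ∑ _S ∈ D, p := by simp [mul_comm]
      _ ≤ _ := Finset.sum_le_sum fun S hS =>
          cycle_mixed p a l1 l2 hp ha S (hcyc S hS).1 (hcyc S hS).2
  have e1 : l2 * (p * a - a) = l2 * a * (p - 1) := by
    rw [show p * a - a = (p - 1) * a by rw [Nat.sub_mul, one_mul]]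
    ring
  have part3 : p * (l1 * (a - 1) + l2 * a * (p - 1)) ≤ l2 * a ^ 2 * p * (p - 1) := by
    calc p * (l1 * (a - 1) + l2 * a * (p - 1)) = p * (2 * D.card) := by
          rw [hdeg2, e1]
      _ = 2 * (D.card * p) := by ring
      _ ≤ 2 * Nat.card {e : KEdge p a l1 l2 // KMixed p a l1 l2 e} := by
          exact Nat.mul_le_mul_left 2 hDlow
      _ = l2 * a ^ 2 * p * (p - 1) := part2
  have part4 : l1 ≤ l2 * a * (p - 1) := by
    have h5 : p * (l1 * (a - 1) + l2 * a * (p - 1)) ≤ p * (l2 * a * (p - 1) * a) := by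
      calc p * (l1 * (a - 1) + l2 * a * (p - 1)) ≤ l2 * a ^ 2 * p * (p - 1) := part3
        _ = p * (l2 * a * (p - 1) * a) := by ring
    have h6 : l1 * (a - 1) + l2 * a * (p - 1) ≤ l2 * a * (p - 1) * a :=
      Nat.le_of_mul_le_mul_left h5 (by omega)
    have h7 : l2 * a * (p - 1) * a = l2 * a * (p - 1) * (a - 1) + l2 * a * (p - 1) := by
      have h : a - 1 + 1 = a := by omega
      calc l2 * a * (p - 1) * a = l2 * a * (p - 1) * ((a - 1) + 1) := by rw [h]
        _ = l2 * a * (p - 1) * (a - 1) + l2 * a * (p - 1) := by ring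
    have h8 : l1 * (a - 1) ≤ l2 * a * (p - 1) * (a - 1) := by omega
    exact Nat.le_of_mul_le_mul_right h8 (by omega)
  exact ⟨part1, part2, part3, part4⟩
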